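/- Let g, g' ∈ GL_n(k) with g' = g b for some invertible upper triangular matrix b, and let X ∈ Mat_n(k). Then the block matrices [[X, g], [w₀ g⁻¹, 0]] and [[X, g'], [w₀ g'⁻¹, 0]] lie in the same double coset B⁻_{2n} \ GL_{2n} / B_{2n}, where B_{2n} (resp. B⁻_{2n}) is the group of invertible upper (resp. lower) triangular 2n×2n matrices. Equivalently, for every (i,j), the ranks of the top-left i×j submatrices of the two block matrices agree. -/

import Mathlib

open Matrix

def w0 (k : Type*) [Field k] (n : ℕ) : Matrix (Fin n) (Fin n) k :=
  Matrix.of fun i j => if j = i.rev then 1 else 0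

noncomputable def blockM {k : Type*} [Field k] {n : ℕ} (X g : Matrix (Fin n) (Fin n) k) :
    Matrix (Fin (n + n)) (Fin (n + n)) k :=
  (Matrix.fromBlocks X g (w0 k n * g⁻¹) 0).submatrix
    finSumFinEquiv.symm finSumFinEquiv.symm

/-- Invertible lower triangular matrices. -/
def IsLowerTri {k : Type*} [Field k] {m : ℕ} (M : Matrix (Fin m) (Fin m) k) : Prop :=
  ∀ i j, i < j → M i j = 0

/-- Invertible upper triangular matrices. -/
def IsUpperTri {k : Type*} [Field k] {m : ℕ} (M : Matrix (Fin m) (Fin m) k) : Prop :=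
  ∀ i j, j < i → M i j = 0

section Aux

variable {k : Type*} [Field k] {n m : ℕ}

lemma w0_mul_w0 : w0 k n * w0 k n = 1 := by
  ext i j
  simp only [Matrix.mul_apply, w0, Matrix.of_apply, Matrix.one_apply]
  rw [Finset.sum_eq_single i.rev]
  · simp [Fin.rev_rev, Matrix.one_apply, eq_comm]
  · intro s _ hs
    rw [if_neg hs, zero_mul]
  · simp

lemma mul_w0_apply (A : Matrix (Fin n) (Fin n) k) (i j : Fin n) :
    (A * w0 k n) i j = A i j.rev := by
  simp only [Matrix.mul_apply, w0, Matrix.of_apply]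
  rw [Finset.sum_eq_single j.rev]
  · simp [Fin.rev_rev]
  · intro s _ hs
    rw [if_neg, mul_zero]
    intro h
    exact hs (by rw [h, Fin.rev_rev])
  · simp

lemma w0_mul_apply (A : Matrix (Fin n) (Fin n) k) (i j : Fin n) :
    (w0 k n * A) i j = A i.rev j := by
  simp only [Matrix.mul_apply, w0, Matrix.of_apply]
  rw [Finset.sum_eq_single i.rev] <;> simp +contextual

lemma conj_w0_lower {A : Matrix (Fin n) (Fin n) k} (hA : IsUpperTri A) :
    IsLowerTri (w0 k n * A * w0 k n) := by
  intro i j hij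
  rw [mul_w0_apply, w0_mul_apply]
  rw [Fin.lt_def] at hij
  have hi := i.isLt
  have hj := j.isLt
  exact hA _ _ (by rw [Fin.lt_def, Fin.val_rev, Fin.val_rev]; omega)

lemma sum_trunc {i : ℕ} (h : i ≤ m) (f : Fin m → k)
    (hf : ∀ s : Fin m, i ≤ (s : ℕ) → f s = 0) :
    ∑ s, f s = ∑ s : Fin i, f (Fin.castLE h s) := by
  classical
  set F : ℕ → k := fun t => if ht : t < m then f ⟨t, ht⟩ else 0 with hF
  have h1 : ∑ s : Fin m, f s = ∑ s ∈ Finset.range m, F s := by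
    rw [← Fin.sum_univ_eq_sum_range]
    exact Finset.sum_congr rfl fun s _ => by simp [hF, s.isLt]
  have h2 : ∑ s : Fin i, f (Fin.castLE h s) = ∑ s ∈ Finset.range i, F s := by
    rw [← Fin.sum_univ_eq_sum_range]
    exact Finset.sum_congr rfl fun s _ => by
      simp [hF, lt_of_lt_of_le s.isLt h, Fin.castLE]
  rw [h1, h2, ← Finset.sum_subset (Finset.range_subset_range.2 h)]
  intro x hx hx'
  simp only [Finset.mem_range] at hx hx'
  simp [hF, hx, hf ⟨x, hx⟩ (not_lt.mp hx')]

lemma nw_mul (L M U : Matrix (Fin m) (Fin m) k) (hLt : IsLowerTri L) (hUt : IsUpperTri U)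
    {i j : ℕ} (hi : i ≤ m) (hj : j ≤ m) :
    (L * M * U).submatrix (Fin.castLE hi) (Fin.castLE hj) =
      L.submatrix (Fin.castLE hi) (Fin.castLE hi) *
        M.submatrix (Fin.castLE hi) (Fin.castLE hj) *
        U.submatrix (Fin.castLE hj) (Fin.castLE hj) := by
  ext r c
  have hLM : ∀ t : Fin j, (L * M) (Fin.castLE hi r) (Fin.castLE hj t) =
      ∑ s : Fin i, L (Fin.castLE hi r) (Fin.castLE hi s) * M (Fin.castLE hi s) (Fin.castLE hj t) := by
    intro t
    rw [Matrix.mul_apply]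
    exact sum_trunc hi _ fun s hs => by
      rw [hLt _ _ (by rw [Fin.lt_def]; exact lt_of_lt_of_le r.isLt hs), zero_mul]
  have h1 : (L * M * U) (Fin.castLE hi r) (Fin.castLE hj c) =
      ∑ t : Fin j, (L * M) (Fin.castLE hi r) (Fin.castLE hj t) * U (Fin.castLE hj t) (Fin.castLE hj c) := by
    rw [Matrix.mul_apply]
    exact sum_trunc hj _ fun t ht => by
      rw [hUt _ _ (by rw [Fin.lt_def]; exact lt_of_lt_of_le c.isLt ht), mul_zero]
  rw [Matrix.submatrix_apply, h1]
  have h2 : ∑ t : Fin j, (L * M) (Fin.castLE hi r) (Fin.castLE hj t) * U (Fin.castLE hj t) (Fin.castLE hj c)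
      = ∑ t : Fin j, (∑ s : Fin i, L (Fin.castLE hi r) (Fin.castLE hi s) * M (Fin.castLE hi s) (Fin.castLE hj t))
          * U (Fin.castLE hj t) (Fin.castLE hj c) :=
    Finset.sum_congr rfl fun t _ => by rw [hLM t]
  rw [h2]
  simp only [Matrix.mul_apply, Matrix.submatrix_apply]

lemma diag_ne_zero_lower {L : Matrix (Fin m) (Fin m) k} (hL : IsUnit L.det)
    (hLt : IsLowerTri L) (s : Fin m) : L s s ≠ 0 := by
  intro hs
  rw [Matrix.det_of_lowerTriangular L (fun a b hab => hLt a b hab)] at hL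
  rw [isUnit_iff_ne_zero] at hL
  exact hL (Finset.prod_eq_zero (Finset.mem_univ s) hs)

lemma diag_ne_zero_upper {U : Matrix (Fin m) (Fin m) k} (hU : IsUnit U.det)
    (hUt : IsUpperTri U) (s : Fin m) : U s s ≠ 0 := by
  intro hs
  rw [Matrix.det_of_upperTriangular (fun a b hab => hUt a b hab)] at hU
  rw [isUnit_iff_ne_zero] at hU
  exact hU (Finset.prod_eq_zero (Finset.mem_univ s) hs)

lemma nw_det_lower {L : Matrix (Fin m) (Fin m) k} (hL : IsUnit L.det)
    (hLt : IsLowerTri L) {i : ℕ} (hi : i ≤ m) :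
    IsUnit (L.submatrix (Fin.castLE hi) (Fin.castLE hi)).det := by
  rw [Matrix.det_of_lowerTriangular (L.submatrix (Fin.castLE hi) (Fin.castLE hi))
      (fun a b hab => hLt _ _ (OrderDual.toDual_lt_toDual.mp hab)),
    isUnit_iff_ne_zero, Finset.prod_ne_zero_iff]
  exact fun s _ => diag_ne_zero_lower hL hLt _

lemma nw_det_upper {U : Matrix (Fin m) (Fin m) k} (hU : IsUnit U.det)
    (hUt : IsUpperTri U) {i : ℕ} (hi : i ≤ m) :
    IsUnit (U.submatrix (Fin.castLE hi) (Fin.castLE hi)).det := by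
  rw [Matrix.det_of_upperTriangular (M := U.submatrix (Fin.castLE hi) (Fin.castLE hi))
      (fun a b hab => hUt _ _ hab),
    isUnit_iff_ne_zero, Finset.prod_ne_zero_iff]
  exact fun s _ => diag_ne_zero_upper hU hUt _

lemma fromBlocks_lower {A C D : Matrix (Fin n) (Fin n) k} (hA : IsLowerTri A)
    (hD : IsLowerTri D) :
    IsLowerTri ((Matrix.fromBlocks A 0 C D).submatrix finSumFinEquiv.symm finSumFinEquiv.symm) := by
  intro p q hpq
  obtain ⟨x, rfl⟩ := finSumFinEquiv.surjective p
  obtain ⟨y, rfl⟩ := finSumFinEquiv.surjective q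
  simp only [Matrix.submatrix_apply, Equiv.symm_apply_apply]
  rcases x with a | a <;> rcases y with c | c <;>
    simp only [finSumFinEquiv_apply_left, finSumFinEquiv_apply_right, Fin.lt_def,
      Fin.coe_castAdd, Fin.coe_natAdd] at hpq <;>
    simp only [Matrix.fromBlocks_apply₁₁, Matrix.fromBlocks_apply₁₂, Matrix.fromBlocks_apply₂₁,
      Matrix.fromBlocks_apply₂₂, Matrix.zero_apply]
  · exact hA _ _ hpq
  · omega
  · exact hD _ _ (by omega)

lemma fromBlocks_upper {A B D : Matrix (Fin n) (Fin n) k} (hA : IsUpperTri A)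
    (hD : IsUpperTri D) :
    IsUpperTri ((Matrix.fromBlocks A B 0 D).submatrix finSumFinEquiv.symm finSumFinEquiv.symm) := by
  intro p q hpq
  obtain ⟨x, rfl⟩ := finSumFinEquiv.surjective p
  obtain ⟨y, rfl⟩ := finSumFinEquiv.surjective q
  simp only [Matrix.submatrix_apply, Equiv.symm_apply_apply]
  rcases x with a | a <;> rcases y with c | c <;>
    simp only [finSumFinEquiv_apply_left, finSumFinEquiv_apply_right, Fin.lt_def,
      Fin.coe_castAdd, Fin.coe_natAdd] at hpq <;>
    simp only [Matrix.fromBlocks_apply₁₁, Matrix.fromBlocks_apply₁₂, Matrix.fromBlocks_apply₂₁,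
      Matrix.fromBlocks_apply₂₂, Matrix.zero_apply]
  · exact hA _ _ hpq
  · omega
  · exact hD _ _ (by omega)

lemma one_lower : IsLowerTri (1 : Matrix (Fin n) (Fin n) k) := fun i j hij =>
  Matrix.one_apply_ne (ne_of_lt hij)

lemma one_upper : IsUpperTri (1 : Matrix (Fin n) (Fin n) k) := fun i j hij =>
  Matrix.one_apply_ne (ne_of_gt hij)

end Aux

/-- If `g' = g b` for an invertible upper triangular `b`, the block matrices
`[[X, g], [w₀ g⁻¹, 0]]` and `[[X, g'], [w₀ g'⁻¹, 0]]` lie in the same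
`B⁻_{2n} × B_{2n}` double coset; equivalently, all their northwest submatrix
ranks agree. -/
theorem stmt_7 {k : Type*} [Field k] {n : ℕ}
    (g g' b X : Matrix (Fin n) (Fin n) k)
    (hg : IsUnit g) (hb : IsUnit b) (hbu : IsUpperTri b) (hgg : g' = g * b) :
    (∃ L U : Matrix (Fin (n + n)) (Fin (n + n)) k,
      IsUnit L ∧ IsLowerTri L ∧ IsUnit U ∧ IsUpperTri U ∧
      blockM X g' = L * blockM X g * U) ∧
    (∀ (i j : ℕ) (hi : i ≤ n + n) (hj : j ≤ n + n),
      ((blockM X g').submatrix (Fin.castLE hi) (Fin.castLE hj)).rank =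
      ((blockM X g).submatrix (Fin.castLE hi) (Fin.castLE hj)).rank) := by
  have hbdet : IsUnit b.det := (Matrix.isUnit_iff_isUnit_det b).mp hb
  have hbinv : IsUnit b⁻¹ := Matrix.isUnit_nonsing_inv_iff.mpr hb
  have hbinvu : IsUpperTri b⁻¹ := by
    haveI := hb.invertible
    intro i j hij
    exact Matrix.blockTriangular_inv_of_blockTriangular
      (b := (id : Fin n → Fin n)) (fun a c hac => hbu a c hac) hij
  have hw0 : IsUnit (w0 k n) := by
    rw [Matrix.isUnit_iff_isUnit_det]
    exact IsUnit.of_mul_eq_one _ (by rw [← Matrix.det_mul, w0_mul_w0, Matrix.det_one])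
  set A : Matrix (Fin n) (Fin n) k := w0 k n * b⁻¹ * w0 k n with hA
  have hAunit : IsUnit A := (hw0.mul hbinv).mul hw0
  have hAlow : IsLowerTri A := conj_w0_lower hbinvu
  set L : Matrix (Fin (n + n)) (Fin (n + n)) k :=
    (Matrix.fromBlocks 1 0 0 A).submatrix finSumFinEquiv.symm finSumFinEquiv.symm with hL
  set U : Matrix (Fin (n + n)) (Fin (n + n)) k :=
    (Matrix.fromBlocks 1 0 0 b).submatrix finSumFinEquiv.symm finSumFinEquiv.symm with hU
  have hLunit : IsUnit L := by
    rw [Matrix.isUnit_iff_isUnit_det, hL, Matrix.det_submatrix_equiv_self,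
      Matrix.det_fromBlocks_zero₂₁, Matrix.det_one, one_mul]
    exact (Matrix.isUnit_iff_isUnit_det A).mp hAunit
  have hUunit : IsUnit U := by
    rw [Matrix.isUnit_iff_isUnit_det, hU, Matrix.det_submatrix_equiv_self,
      Matrix.det_fromBlocks_zero₂₁, Matrix.det_one, one_mul]
    exact hbdet
  have hLlow : IsLowerTri L := fromBlocks_lower one_lower hAlow
  have hUup : IsUpperTri U := fromBlocks_upper one_upper hbu
  have hww : A * (w0 k n * g⁻¹) = w0 k n * (g * b)⁻¹ := by
    rw [Matrix.mul_inv_rev, hA]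
    calc w0 k n * b⁻¹ * w0 k n * (w0 k n * g⁻¹)
        = w0 k n * b⁻¹ * (w0 k n * w0 k n) * g⁻¹ := by noncomm_ring
      _ = w0 k n * (b⁻¹ * g⁻¹) := by rw [w0_mul_w0]; noncomm_ring
  have hblocks : Matrix.fromBlocks X (g * b) (w0 k n * (g * b)⁻¹) 0 =
      Matrix.fromBlocks 1 0 0 A * Matrix.fromBlocks X g (w0 k n * g⁻¹) 0 *
        Matrix.fromBlocks 1 0 0 b := by
    rw [Matrix.fromBlocks_multiply, Matrix.fromBlocks_multiply, ← hww]
    simp only [Matrix.one_mul, Matrix.zero_mul, Matrix.mul_one, Matrix.mul_zero,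
      add_zero, zero_add]
  have key : blockM X g' = L * blockM X g * U := by
    subst hgg
    rw [hL, hU, blockM, blockM, Matrix.submatrix_mul_equiv, Matrix.submatrix_mul_equiv, hblocks]
  refine ⟨⟨L, U, hLunit, hLlow, hUunit, hUup, key⟩, ?_⟩
  intro i j hi hj
  rw [key, nw_mul _ _ _ hLlow hUup hi hj,
    Matrix.rank_mul_eq_left_of_isUnit_det _ _
      (nw_det_upper ((Matrix.isUnit_iff_isUnit_det U).mp hUunit) hUup hj),
    Matrix.rank_mul_eq_right_of_isUnit_det _ _
      (nw_det_lower ((Matrix.isUnit_iff_isUnit_det L).mp hLunit) hLlow hi)]
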